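/- arXiv:1105.2237 — 5 statements merged into one kernel-verified Lean document; each statement's English description precedes it below -/
import Mathlib

section
/- Let L be a Lie algebra over a commutative ring Φ in which 2 is invertible, graded by a group G. For any n ≥ 2 and any elements g₁, g₂, …, g_n ∈ G, if the iterated bracket [L_{g₁}, [L_{g₂}, [⋯, [L_{g_{n−1}}, L_{g_n}]⋯]]] is nonzero, then g_i g_j = g_j g_i for all i, j ∈ {1, 2, …, n}. -/
/-- The span of all brackets `⁅a, b⁆` with `a ∈ A`, `b ∈ B`. -/
def bracketSpan {Φ L : Type*} [CommRing Φ] [LieRing L] [LieAlgebra Φ L]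
    (A B : Submodule Φ L) : Submodule Φ L :=
  Submodule.span Φ {z | ∃ a ∈ A, ∃ b ∈ B, z = ⁅a, b⁆}

/-- The right-nested iterated bracket `⁅L_{g₁}, ⁅L_{g₂}, ⁅⋯, ⁅L_{g_{n-1}}, L_{g_n}⁆⋯⁆` of the
homogeneous components indexed by a list `[g₁, …, g_n]`. -/
def iterBracket {Φ L G : Type*} [CommRing Φ] [LieRing L] [LieAlgebra Φ L]
    (Lg : G → Submodule Φ L) : List G → Submodule Φ L
  | [] => ⊥
  | [g] => Lg g
  | g :: (g' :: l) => bracketSpan (Lg g) (iterBracket Lg (g' :: l))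

section Aux

variable {Φ L G : Type*} [CommRing Φ] [LieRing L] [LieAlgebra Φ L] [Group G] [DecidableEq G]

/-- Two distinct homogeneous components intersect trivially. -/
lemma grading_eq_zero_of_ne (Lg : G → Submodule Φ L) (hdirect : DirectSum.IsInternal Lg)
    {a b : G} (hab : a ≠ b) {x : L} (hxa : x ∈ Lg a) (hxb : x ∈ Lg b) : x = 0 := by
  have hd : Disjoint (Lg a) (Lg b) :=
    hdirect.submodule_iSupIndep.pairwiseDisjoint hab
  exact (Submodule.disjoint_def.mp hd) x hxa hxb

/-- If a bracket of homogeneous elements is nonzero, the degrees commute. -/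
lemma comm_of_bracket_ne (Lg : G → Submodule Φ L) (hdirect : DirectSum.IsInternal Lg)
    (hgrading : ∀ a b : G, ∀ x ∈ Lg a, ∀ y ∈ Lg b, ⁅x, y⁆ ∈ Lg (a * b))
    {a b : G} {x y : L} (hx : x ∈ Lg a) (hy : y ∈ Lg b) (hne : ⁅x, y⁆ ≠ 0) :
    a * b = b * a := by
  by_contra hab
  apply hne
  have h1 : ⁅x, y⁆ ∈ Lg (a * b) := hgrading a b x hx y hy
  have h2 : ⁅x, y⁆ ∈ Lg (b * a) := by
    have h3 : ⁅y, x⁆ ∈ Lg (b * a) := hgrading b a y hy x hx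
    have h4 : (-⁅y, x⁆) ∈ Lg (b * a) := Submodule.neg_mem _ h3
    rwa [lie_skew] at h4
  exact grading_eq_zero_of_ne Lg hdirect hab h1 h2

/-- If `⁅x, w⁆ ≠ 0` and `w` lies in a bracket span, then some generator has
nonzero bracket with `x`. -/
lemma exists_gen_of_bracket_ne {A B : Submodule Φ L} {x w : L}
    (hw : w ∈ bracketSpan A B) (hxw : ⁅x, w⁆ ≠ 0) :
    ∃ y ∈ A, ∃ z ∈ B, ⁅x, ⁅y, z⁆⁆ ≠ 0 := by
  by_contra hc
  push_neg at hc
  apply hxw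
  refine Submodule.span_induction (p := fun w _ => ⁅x, w⁆ = 0) ?_ ?_ ?_ ?_ hw
  · rintro _ ⟨a, ha, b, hb, rfl⟩
    exact hc a ha b hb
  · simp
  · intro a b _ _ h1 h2
    rw [lie_add, h1, h2, add_zero]
  · intro c a _ h1
    rw [lie_smul, h1, smul_zero]

/-- The iterated bracket over a nonempty list lies in the component of the product. -/
lemma iterBracket_le_prod (Lg : G → Submodule Φ L)
    (hgrading : ∀ a b : G, ∀ x ∈ Lg a, ∀ y ∈ Lg b, ⁅x, y⁆ ∈ Lg (a * b)) :
    ∀ (l : List G), l ≠ [] → iterBracket Lg l ≤ Lg l.prod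
  | [], h => absurd rfl h
  | [g], _ => by simp [iterBracket]
  | g :: g' :: t, _ => by
    have heq : iterBracket Lg (g :: g' :: t) =
        bracketSpan (Lg g) (iterBracket Lg (g' :: t)) := rfl
    rw [heq]
    refine Submodule.span_le.2 ?_
    rintro _ ⟨a, ha, b, hb, rfl⟩
    have hb' : b ∈ Lg ((g' :: t).prod) :=
      iterBracket_le_prod Lg hgrading (g' :: t) (by simp) hb
    have hm := hgrading g ((g' :: t).prod) a ha b hb'
    simpa [List.prod_cons] using hm

/-- Key induction: if `x ∈ L_g` has nonzero bracket with an element of the iterated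
bracket over `l`, then `g` commutes with every element of `l`, and the elements of `l`
pairwise commute. -/
lemma keyD (Lg : G → Submodule Φ L) (hdirect : DirectSum.IsInternal Lg)
    (hgrading : ∀ a b : G, ∀ x ∈ Lg a, ∀ y ∈ Lg b, ⁅x, y⁆ ∈ Lg (a * b)) :
    ∀ (l : List G) (g : G) (x : L), x ∈ Lg g → ∀ w ∈ iterBracket Lg l, ⁅x, w⁆ ≠ 0 →
      (∀ gi ∈ l, g * gi = gi * g) ∧ (∀ gi ∈ l, ∀ gj ∈ l, gi * gj = gj * gi)
  | [] => by
    intro g x hx w hw hxw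
    have hw0 : w ∈ (⊥ : Submodule Φ L) := hw
    rw [Submodule.mem_bot] at hw0
    rw [hw0, lie_zero] at hxw
    exact absurd rfl hxw
  | [h] => by
    intro g x hx w hw hxw
    have hw' : w ∈ Lg h := hw
    have hgh : g * h = h * g := comm_of_bracket_ne Lg hdirect hgrading hx hw' hxw
    refine ⟨?_, ?_⟩
    · intro gi hgi
      simp only [List.mem_singleton] at hgi
      subst hgi; exact hgh
    · intro gi hgi gj hgj
      simp only [List.mem_singleton] at hgi hgj
      subst hgi; subst hgj; rfl
  | h :: h' :: t' => by
    intro g x hx w hw hxw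
    have hw' : w ∈ bracketSpan (Lg h) (iterBracket Lg (h' :: t')) := hw
    obtain ⟨y, hy, z, hz, hne3⟩ := exists_gen_of_bracket_ne hw' hxw
    have hyz_ne : ⁅y, z⁆ ≠ 0 := by
      intro h0; rw [h0, lie_zero] at hne3; exact hne3 rfl
    obtain ⟨ih1, ih2⟩ := keyD Lg hdirect hgrading (h' :: t') h y hy z hz hyz_ne
    have hzk : z ∈ Lg ((h' :: t').prod) :=
      iterBracket_le_prod Lg hgrading (h' :: t') (by simp) hz
    set k : G := (h' :: t').prod with hkdef
    have hhk : h * k = k * h := Commute.list_prod_right (h' :: t') h ih1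
    have hyzm : ⁅y, z⁆ ∈ Lg (h * k) := hgrading h k y hy z hzk
    have hxyz_mem : ⁅x, ⁅y, z⁆⁆ ∈ Lg (g * (h * k)) := hgrading _ _ x hx _ hyzm
    have hghk : g * (h * k) = (h * k) * g :=
      comm_of_bracket_ne Lg hdirect hgrading hx hyzm hne3
    -- g commutes with h
    have hgh : g * h = h * g := by
      by_contra hgh'
      have hterm1 : ⁅⁅x, y⁆, z⁆ ≠ 0 := by
        intro h0
        have jac : ⁅x, ⁅y, z⁆⁆ = ⁅y, ⁅x, z⁆⁆ := by
          rw [leibniz_lie, h0, zero_add]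
        have m2 : ⁅x, ⁅y, z⁆⁆ ∈ Lg (h * (g * k)) :=
          jac ▸ hgrading _ _ y hy _ (hgrading _ _ x hx z hzk)
        have hnedeg : g * (h * k) ≠ h * (g * k) := by
          rw [← mul_assoc, ← mul_assoc]
          intro hh
          exact hgh' (mul_right_cancel hh)
        exact hne3 (grading_eq_zero_of_ne Lg hdirect hnedeg hxyz_mem m2)
      have hck : (g * h) * k = k * (g * h) :=
        comm_of_bracket_ne Lg hdirect hgrading (hgrading _ _ x hx y hy) hzk hterm1
      apply hgh'
      have e1 : k * (g * h) = k * (h * g) := by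
        calc k * (g * h) = (g * h) * k := hck.symm
          _ = g * (h * k) := mul_assoc _ _ _
          _ = (h * k) * g := hghk
          _ = (k * h) * g := by rw [hhk]
          _ = k * (h * g) := mul_assoc _ _ _
      exact mul_left_cancel e1
    -- g commutes with every element of the tail
    have hgt : ∀ gi ∈ h' :: t', g * gi = gi * g := by
      by_cases hxz : ⁅x, z⁆ = 0
      · have jac : ⁅x, ⁅y, z⁆⁆ = ⁅⁅x, y⁆, z⁆ := by
          rw [leibniz_lie, hxz, lie_zero, add_zero]
        have hterm : ⁅⁅x, y⁆, z⁆ ≠ 0 := jac ▸ hne3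
        obtain ⟨ih1', -⟩ := keyD Lg hdirect hgrading (h' :: t') (g * h) ⁅x, y⁆
          (hgrading _ _ x hx y hy) z hz hterm
        intro gi hgi
        have h1 := ih1' gi hgi
        have h2 := ih1 gi hgi
        have e : (g * gi) * h = (gi * g) * h := by
          calc (g * gi) * h = g * (gi * h) := mul_assoc _ _ _
            _ = g * (h * gi) := by rw [← h2]
            _ = (g * h) * gi := (mul_assoc _ _ _).symm
            _ = gi * (g * h) := h1
            _ = (gi * g) * h := (mul_assoc _ _ _).symm
        exact mul_right_cancel e
      · exact (keyD Lg hdirect hgrading (h' :: t') g x hx z hz hxz).1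
    refine ⟨?_, ?_⟩
    · intro gi hgi
      rw [List.mem_cons] at hgi
      rcases hgi with rfl | hgi
      · exact hgh
      · exact hgt gi hgi
    · intro gi hgi gj hgj
      rw [List.mem_cons] at hgi hgj
      rcases hgi with rfl | hgi <;> rcases hgj with rfl | hgj
      · rfl
      · exact ih1 _ hgj
      · exact (ih1 _ hgi).symm
      · exact ih2 _ hgi _ hgj

end Aux

/-- If `L` is a Lie algebra over a commutative ring `Φ` with `2` invertible, graded by a
group `G`, and the iterated bracket `⁅L_{g₁}, ⁅L_{g₂}, ⁅⋯, ⁅L_{g_{n-1}}, L_{g_n}⁆⋯⁆` is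
nonzero (for `n ≥ 2`), then `g_i g_j = g_j g_i` for all `i, j ∈ {1, …, n}`. -/
theorem commute_of_iterBracket_ne_bot
    {Φ L G : Type*} [CommRing Φ] [Invertible (2 : Φ)]
    [LieRing L] [LieAlgebra Φ L] [Group G] [DecidableEq G]
    (Lg : G → Submodule Φ L)
    (hdirect : DirectSum.IsInternal Lg)
    (hgrading : ∀ a b : G, ∀ x ∈ Lg a, ∀ y ∈ Lg b, ⁅x, y⁆ ∈ Lg (a * b))
    (l : List G) (hlen : 2 ≤ l.length)
    (hne : iterBracket Lg l ≠ ⊥) :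
    ∀ gi ∈ l, ∀ gj ∈ l, gi * gj = gj * gi := by
  rcases l with - | ⟨g, - | ⟨h, t⟩⟩
  · simp at hlen
  · simp at hlen
  · have hex : ∃ x ∈ Lg g, ∃ w ∈ iterBracket Lg (h :: t), ⁅x, w⁆ ≠ 0 := by
      by_contra hc
      push_neg at hc
      apply hne
      have heq : iterBracket Lg (g :: h :: t) =
          bracketSpan (Lg g) (iterBracket Lg (h :: t)) := rfl
      rw [heq, eq_bot_iff]
      refine Submodule.span_le.2 ?_
      rintro _ ⟨a, ha, b, hb, rfl⟩
      simpa using hc a ha b hb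
    obtain ⟨x, hx, w, hw, hxw⟩ := hex
    obtain ⟨h1, h2⟩ := keyD Lg hdirect hgrading (h :: t) g x hx w hw hxw
    intro gi hgi gj hgj
    rw [List.mem_cons] at hgi hgj
    rcases hgi with rfl | hgi <;> rcases hgj with rfl | hgj
    · rfl
    · exact h1 _ hgj
    · exact (h1 _ hgi).symm
    · exact h2 _ hgi _ hgj
end

section
/- Let L be a Lie algebra over a commutative ring Φ in which 2 is invertible, graded by a group G, and let g, g' ∈ G with gg' ≠ g'g. Then for every n ≥ 0 and all elements g₁, …, g_n ∈ G, the iterated bracket [L_{g'}, [L_{g₁}, [⋯, [L_{g_n}, L_g]⋯]]] equals 0. -/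
lemma iterBracket_cons {Φ L G : Type*} [CommRing Φ] [LieRing L] [LieAlgebra Φ L]
    (Lg : G → Submodule Φ L) (hd : G) (tl : List G) (h : tl ≠ []) :
    iterBracket Lg (hd :: tl) = bracketSpan (Lg hd) (iterBracket Lg tl) := by
  cases tl with
  | nil => exact absurd rfl h
  | cons a l => rfl

lemma bracket_eq_zero_of_not_commute {Φ L G : Type*} [CommRing Φ]
    [LieRing L] [LieAlgebra Φ L] [Group G] [DecidableEq G]
    (Lg : G → Submodule Φ L)
    (hdirect : DirectSum.IsInternal Lg)
    (hgrading : ∀ a b : G, ∀ x ∈ Lg a, ∀ y ∈ Lg b, ⁅x, y⁆ ∈ Lg (a * b))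
    {p q : G} (hpq : p * q ≠ q * p) {a b : L} (ha : a ∈ Lg p) (hb : b ∈ Lg q) :
    ⁅a, b⁆ = 0 := by
  have h1 : ⁅a, b⁆ ∈ Lg (p * q) := hgrading p q a ha b hb
  have h2 : ⁅a, b⁆ ∈ Lg (q * p) := by
    have := (Lg (q * p)).neg_mem (hgrading q p b hb a ha)
    rwa [lie_skew] at this
  have hdisj : Disjoint (Lg (p * q)) (Lg (q * p)) :=
    hdirect.submodule_iSupIndep.pairwiseDisjoint hpq
  exact Submodule.disjoint_def.mp hdisj _ h1 h2

lemma key_lemma {Φ L G : Type*} [CommRing Φ]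
    [LieRing L] [LieAlgebra Φ L] [Group G] [DecidableEq G]
    (Lg : G → Submodule Φ L)
    (hdirect : DirectSum.IsInternal Lg)
    (hgrading : ∀ a b : G, ∀ x ∈ Lg a, ∀ y ∈ Lg b, ⁅x, y⁆ ∈ Lg (a * b))
    (g : G) :
    ∀ n : ℕ, ∀ l : List G, l.length ≤ n → ∀ h : G, h * g ≠ g * h →
      ∀ a ∈ Lg h, ∀ x ∈ iterBracket Lg (l ++ [g]), ⁅a, x⁆ = 0 := by
  intro n
  induction n with
  | zero =>
    intro l hl h hh a ha x hx
    have : l = [] := List.length_eq_zero_iff.mp (Nat.le_zero.mp hl)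
    subst this
    exact bracket_eq_zero_of_not_commute Lg hdirect hgrading hh ha hx
  | succ n ih =>
    intro l hl h hh a ha x hx
    cases l with
    | nil => exact bracket_eq_zero_of_not_commute Lg hdirect hgrading hh ha hx
    | cons g₁ l' =>
      have hl' : l'.length ≤ n := by simpa using Nat.succ_le_succ_iff.mp (by simpa using hl)
      rw [show (g₁ :: l') ++ [g] = g₁ :: (l' ++ [g]) from rfl,
        iterBracket_cons Lg g₁ (l' ++ [g]) (by simp)] at hx
      -- reduce to generators via the kernel of `ad a`
      have hker : bracketSpan (Lg g₁) (iterBracket Lg (l' ++ [g])) ≤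
          LinearMap.ker (LieAlgebra.ad Φ L a) := by
        rw [bracketSpan, Submodule.span_le]
        rintro z ⟨b, hb, m, hm, rfl⟩
        rw [SetLike.mem_coe, LinearMap.mem_ker, LieAlgebra.ad_apply]
        have ham : ⁅a, m⁆ = 0 := ih l' hl' h hh a ha m hm
        by_cases hc1 : h * g₁ = g₁ * h
        · by_cases hc2 : (h * g₁) * g = g * (h * g₁)
          · -- then g₁ and g do not commute, so ⁅b, m⁆ = 0
            have hgg : g₁ * g ≠ g * g₁ := by
              intro hgg
              apply hh
              have : g₁ * (h * g) = g₁ * (g * h) := by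
                calc g₁ * (h * g) = (g₁ * h) * g := by rw [mul_assoc]
                  _ = (h * g₁) * g := by rw [hc1]
                  _ = g * (h * g₁) := hc2
                  _ = g * (g₁ * h) := by rw [hc1]
                  _ = (g * g₁) * h := by rw [mul_assoc]
                  _ = (g₁ * g) * h := by rw [hgg]
                  _ = g₁ * (g * h) := by rw [mul_assoc]
              exact mul_left_cancel this
            have hbm : ⁅b, m⁆ = 0 := ih l' hl' g₁ hgg b hb m hm
            rw [hbm, lie_zero]
          · -- ⁅⁅a,b⁆, m⁆ = 0 by induction with h := h * g₁
            have hab : ⁅a, b⁆ ∈ Lg (h * g₁) := hgrading h g₁ a ha b hb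
            have h1 : ⁅⁅a, b⁆, m⁆ = 0 := ih l' hl' (h * g₁) hc2 ⁅a, b⁆ hab m hm
            rw [leibniz_lie, h1, ham, lie_zero, add_zero]
        · have hab : ⁅a, b⁆ = 0 :=
            bracket_eq_zero_of_not_commute Lg hdirect hgrading hc1 ha hb
          rw [leibniz_lie, hab, ham, zero_lie, lie_zero, add_zero]
      have := hker hx
      rwa [LinearMap.mem_ker, LieAlgebra.ad_apply] at this

/-- If `L` is a Lie algebra over a commutative ring `Φ` with `2` invertible, graded by a
group `G`, and `g g' ≠ g' g`, then every iterated bracket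
`⁅L_{g'}, ⁅L_{g₁}, ⁅⋯, ⁅L_{g_n}, L_g⁆⋯⁆` (with `n ≥ 0`) vanishes. -/
theorem iterBracket_eq_bot_of_not_commute
    {Φ L G : Type*} [CommRing Φ] [Invertible (2 : Φ)]
    [LieRing L] [LieAlgebra Φ L] [Group G] [DecidableEq G]
    (Lg : G → Submodule Φ L)
    (hdirect : DirectSum.IsInternal Lg)
    (hgrading : ∀ a b : G, ∀ x ∈ Lg a, ∀ y ∈ Lg b, ⁅x, y⁆ ∈ Lg (a * b))
    (g g' : G) (hne : g * g' ≠ g' * g) :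
    ∀ l : List G, iterBracket Lg (g' :: (l ++ [g])) = ⊥ := by
  intro l
  rw [iterBracket_cons Lg g' (l ++ [g]) (by simp), bracketSpan,
    Submodule.span_eq_bot]
  rintro z ⟨a, ha, x, hx, rfl⟩
  exact key_lemma Lg hdirect hgrading g l.length l le_rfl g' hne.symm a ha x hx
end

section
/- Let L be a Lie algebra over a commutative ring Φ in which 2 is invertible, graded by a group G, and let g, g' ∈ G with gg' ≠ g'g. Then [I, J] = 0, where I is the Lie ideal of L generated by L_g and J is the Lie ideal of L generated by L_{g'}. -/
namespace LieGradedCommAux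

variable {Φ L G : Type*} [CommRing Φ] [LieRing L] [LieAlgebra Φ L] [Group G] [DecidableEq G]

/-- Iterated bracket `⁅z₁, ⁅z₂, … ⁅zₙ, c⁆…⁆⁆`. -/
def wrapL (l : List L) (c : L) : L := l.foldr (fun z acc => ⁅z, acc⁆) c

@[simp] lemma wrapL_nil (c : L) : wrapL [] c = c := rfl

@[simp] lemma wrapL_cons (z : L) (l : List L) (c : L) :
    wrapL (z :: l) c = ⁅z, wrapL l c⁆ := rfl

lemma wrapL_append (l₁ l₂ : List L) (c : L) :
    wrapL (l₁ ++ l₂) c = wrapL l₁ (wrapL l₂ c) := by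
  induction l₁ with
  | nil => rfl
  | cons z l₁ ih => simp [wrapL_cons, ih]

@[simp] lemma wrapL_zero (l : List L) : wrapL l (0 : L) = 0 := by
  induction l with
  | nil => rfl
  | cons z l ih => simp [wrapL_cons, ih]

lemma wrapL_add (l : List L) (c c' : L) :
    wrapL l (c + c') = wrapL l c + wrapL l c' := by
  induction l with
  | nil => rfl
  | cons z l ih => simp [wrapL_cons, ih]

lemma wrapL_sub (l : List L) (c c' : L) :
    wrapL l (c - c') = wrapL l c - wrapL l c' := by
  induction l with
  | nil => rfl
  | cons z l ih => simp [wrapL_cons, ih]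

lemma wrapL_neg (l : List L) (c : L) : wrapL l (-c) = -wrapL l c := by
  induction l with
  | nil => rfl
  | cons z l ih => simp [wrapL_cons, ih]

lemma wrapL_smul (l : List L) (r : Φ) (c : L) :
    wrapL l (r • c) = r • wrapL l c := by
  induction l with
  | nil => rfl
  | cons z l ih => simp [wrapL_cons, ih]

section Graded

variable (Lg : G → Submodule Φ L)

/-- homogeneous components of distinct degrees intersect trivially -/
lemma homog_unique (hdirect : DirectSum.IsInternal Lg) {a b : G} (hab : a ≠ b)
    {m : L} (ha : m ∈ Lg a) (hb : m ∈ Lg b) : m = 0 := by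
  have hd : Disjoint (Lg a) (Lg b) := hdirect.submodule_iSupIndep.pairwiseDisjoint hab
  exact (Submodule.disjoint_def.mp hd) m ha hb

/-- induction over homogeneous components -/
lemma homog_induction (hdirect : DirectSum.IsInternal Lg) {p : L → Prop}
    (hhom : ∀ (h : G), ∀ z ∈ Lg h, p z) (h0 : p 0)
    (hadd : ∀ u v, p u → p v → p (u + v)) (t : L) : p t := by
  have ht : t ∈ ⨆ i, Lg i := by
    rw [hdirect.submodule_iSup_eq_top]; trivial
  exact Submodule.iSup_induction (motive := p) Lg ht hhom h0 hadd

lemma wrapL_mem (hgrading : ∀ a b : G, ∀ x ∈ Lg a, ∀ y ∈ Lg b, ⁅x, y⁆ ∈ Lg (a * b)) :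
    ∀ (l : List (L × G)), (∀ p ∈ l, p.1 ∈ Lg p.2) → ∀ {e : G} {c : L}, c ∈ Lg e →
      wrapL (l.map Prod.fst) c ∈ Lg ((l.map Prod.snd).prod * e) := by
  intro l
  induction l with
  | nil => intro _ e c hc; simpa using hc
  | cons p l ih =>
    intro hl e c hc
    have h1 : wrapL ((p :: l).map Prod.fst) c = ⁅p.1, wrapL (l.map Prod.fst) c⁆ := rfl
    have h2 := hgrading p.2 ((l.map Prod.snd).prod * e) p.1
      (hl p (List.mem_cons_self (a := p) (l := l)))
      (wrapL (l.map Prod.fst) c) (ih (fun q hq => hl q (List.mem_cons_of_mem _ hq)) hc)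
    rw [h1]
    simpa [mul_assoc] using h2

/-- choose degrees for a list of homogeneous elements -/
lemma choosePairs : ∀ (l : List L), (∀ z ∈ l, ∃ h, z ∈ Lg h) →
    ∃ lp : List (L × G), lp.map Prod.fst = l ∧ ∀ p ∈ lp, p.1 ∈ Lg p.2 := by
  intro l
  induction l with
  | nil => exact fun _ => ⟨[], rfl, by simp⟩
  | cons z l ih =>
    intro hl
    obtain ⟨h, hh⟩ := hl z (List.mem_cons_self (a := z) (l := l))
    obtain ⟨lp, h1, h2⟩ := ih (fun w hw => hl w (List.mem_cons_of_mem _ hw))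
    refine ⟨(z, h) :: lp, by simp [h1], ?_⟩
    intro p hp
    rcases List.mem_cons.mp hp with rfl | hp
    · exact hh
    · exact h2 p hp

/-- The main inductive statement. -/
def MainStmt (n : ℕ) : Prop :=
  ∀ a b : G, a * b ≠ b * a → ∀ x ∈ Lg a, ∀ y ∈ Lg b,
    ∀ l : List L, (∀ z ∈ l, ∃ h, z ∈ Lg h) → l.length = n →
      ∀ t : L, ⁅x, wrapL l ⁅y, t⁆⁆ = 0

/-- Extension of `MainStmt` to lists of arbitrary (non-homogeneous) elements. -/
lemma mainStmt_ext (hdirect : DirectSum.IsInternal Lg) {n : ℕ} (hm : MainStmt Lg n)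
    {a b : G} (hab : a * b ≠ b * a) {x y : L} (hx : x ∈ Lg a) (hy : y ∈ Lg b) :
    ∀ l : List L, l.length = n → ∀ t : L, ⁅x, wrapL l ⁅y, t⁆⁆ = 0 := by
  suffices H : ∀ (l₂ l₁ : List L), (∀ z ∈ l₁, ∃ h, z ∈ Lg h) →
      (l₁ ++ l₂).length = n → ∀ t : L, ⁅x, wrapL (l₁ ++ l₂) ⁅y, t⁆⁆ = 0 by
    intro l hl t
    exact H l [] (by simp) (by simpa using hl) t
  intro l₂
  induction l₂ with
  | nil =>
    intro l₁ hl₁ hlen t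
    exact hm a b hab x hx y hy (l₁ ++ []) (by simpa using hl₁) hlen t
  | cons z l₂' ih =>
    intro l₁ hl₁ hlen t
    refine homog_induction Lg hdirect (p := fun z' => ∀ t : L, ⁅x, wrapL (l₁ ++ z' :: l₂') ⁅y, t⁆⁆ = 0)
      ?_ ?_ ?_ z t
    · intro h z' hz' t'
      have e : l₁ ++ z' :: l₂' = (l₁ ++ [z']) ++ l₂' := by simp
      rw [e]
      refine ih (l₁ ++ [z']) ?_ ?_ t'
      · intro w hw
        rcases List.mem_append.mp hw with hw | hw
        · exact hl₁ w hw
        · rcases List.mem_singleton.mp hw with rfl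
          exact ⟨h, hz'⟩
      · simp at hlen ⊢; omega
    · intro t'
      rw [wrapL_append]
      simp
    · intro u v hu hv t'
      have e : ∀ w : L, wrapL (l₁ ++ w :: l₂') ⁅y, t'⁆ = wrapL l₁ ⁅w, wrapL l₂' ⁅y, t'⁆⁆ := by
        intro w; rw [wrapL_append]; rfl
      have hu' := hu t'
      have hv' := hv t'
      rw [e] at hu' hv'
      rw [e, add_lie, wrapL_add, lie_add, hu', hv', add_zero]

end Graded

section Jacobi

/-- First key Jacobi identity. -/
lemma key_eq1 (x v z t : L) (P1 : ∀ s : L, ⁅x, ⁅v, s⁆⁆ = 0) :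
    ⁅x, ⁅z, ⁅v, t⁆⁆⁆ = ⁅⁅z, v⁆, ⁅x, t⁆⁆ := by
  have hzv : ⁅x, ⁅z, v⁆⁆ = 0 := by
    have h1 : ⁅z, v⁆ = -⁅v, z⁆ := (lie_skew z v).symm
    rw [h1, lie_neg, P1 z, neg_zero]
  rw [leibniz_lie z v t, lie_add, P1 ⁅z, t⁆, add_zero, leibniz_lie x ⁅z, v⁆ t, hzv,
    zero_lie, zero_add]

/-- Second key Jacobi identity. -/
lemma key_eq2 (x v z t : L) (P2 : ∀ s : L, ⁅v, ⁅x, s⁆⁆ = 0) :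
    ⁅⁅z, v⁆, ⁅x, t⁆⁆ = -⁅⁅z, x⁆, ⁅v, t⁆⁆ := by
  have hzx : ⁅v, ⁅z, x⁆⁆ = 0 := by
    have h1 : ⁅z, x⁆ = -⁅x, z⁆ := (lie_skew z x).symm
    rw [h1, lie_neg, P2 z, neg_zero]
  rw [lie_lie, P2 t, lie_zero, zero_sub, leibniz_lie z x t, lie_add, P2 ⁅z, t⁆, add_zero,
    leibniz_lie v ⁅z, x⁆ t, hzx, zero_lie, zero_add]

end Jacobi

section CoreLemmas

variable {x y : L}

/-- Lemma B : `⁅x, wrapL l₁ ⁅wrapL l₂ y, s⁆⁆ = 0`. -/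
lemma lemB {n : ℕ}
    (IH : ∀ l : List L, l.length < n → ∀ t : L, ⁅x, wrapL l ⁅y, t⁆⁆ = 0) :
    ∀ (l₂ l₁ : List L), l₁.length + l₂.length < n → ∀ s : L,
      ⁅x, wrapL l₁ ⁅wrapL l₂ y, s⁆⁆ = 0 := by
  intro l₂
  induction l₂ with
  | nil =>
    intro l₁ hlen s
    exact IH l₁ (by simpa using hlen) s
  | cons z l₂' ih =>
    intro l₁ hlen s
    have h1 : ⁅wrapL (z :: l₂') y, s⁆
        = ⁅z, ⁅wrapL l₂' y, s⁆⁆ - ⁅wrapL l₂' y, ⁅z, s⁆⁆ := by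
      rw [wrapL_cons, lie_lie]
    have h2 : wrapL l₁ ⁅z, ⁅wrapL l₂' y, s⁆⁆ = wrapL (l₁ ++ [z]) ⁅wrapL l₂' y, s⁆ := by
      rw [wrapL_append]; rfl
    rw [h1, wrapL_sub, lie_sub, h2]
    rw [ih (l₁ ++ [z]) (by simp at hlen ⊢; omega) s,
      ih l₁ (by simp at hlen ⊢; omega) ⁅z, s⁆, sub_zero]

/-- Lemma C : mirror version. -/
lemma lemC {n : ℕ}
    (IH' : ∀ l : List L, l.length < n → ∀ s : L, ⁅y, wrapL l ⁅x, s⁆⁆ = 0) :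
    ∀ (l₂ l₁ : List L), l₁.length + l₂.length < n → ∀ s : L,
      ⁅wrapL l₂ y, wrapL l₁ ⁅x, s⁆⁆ = 0 := by
  intro l₂
  induction l₂ with
  | nil =>
    intro l₁ hlen s
    exact IH' l₁ (by simpa using hlen) s
  | cons z l₂' ih =>
    intro l₁ hlen s
    have h1 : ⁅wrapL (z :: l₂') y, wrapL l₁ ⁅x, s⁆⁆
        = ⁅z, ⁅wrapL l₂' y, wrapL l₁ ⁅x, s⁆⁆⁆ - ⁅wrapL l₂' y, ⁅z, wrapL l₁ ⁅x, s⁆⁆⁆ := by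
      rw [wrapL_cons, lie_lie]
    have h2 : ⁅z, wrapL l₁ ⁅x, s⁆⁆ = wrapL (z :: l₁) ⁅x, s⁆ := rfl
    rw [h1, ih l₁ (by simp at hlen ⊢; omega) s, lie_zero, zero_sub, h2,
      ih (z :: l₁) (by simp at hlen ⊢; omega) s, neg_zero]

/-- Lemma E (reassembly) : the inner word can be collected into a single element. -/
lemma lemE {n : ℕ}
    (IH : ∀ l : List L, l.length < n → ∀ t : L, ⁅x, wrapL l ⁅y, t⁆⁆ = 0) :
    ∀ (l l₁ : List L), l₁.length + l.length ≤ n → ∀ t : L,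
      ⁅x, wrapL l₁ (wrapL l ⁅y, t⁆ - ⁅wrapL l y, t⁆)⁆ = 0 := by
  intro l
  induction l with
  | nil =>
    intro l₁ _ t
    simp
  | cons z l' ih =>
    intro l₁ hlen t
    have hΔ : wrapL (z :: l') ⁅y, t⁆ - ⁅wrapL (z :: l') y, t⁆
        = ⁅z, wrapL l' ⁅y, t⁆ - ⁅wrapL l' y, t⁆⁆ + ⁅wrapL l' y, ⁅z, t⁆⁆ := by
      rw [wrapL_cons, wrapL_cons, lie_lie, lie_sub]
      abel
    rw [hΔ, wrapL_add, lie_add]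
    have h2 : wrapL l₁ ⁅z, wrapL l' ⁅y, t⁆ - ⁅wrapL l' y, t⁆⁆
        = wrapL (l₁ ++ [z]) (wrapL l' ⁅y, t⁆ - ⁅wrapL l' y, t⁆) := by
      rw [wrapL_append]; rfl
    rw [h2, ih (l₁ ++ [z]) (by simp at hlen ⊢; omega) t,
      lemB IH l' l₁ (by simp at hlen ⊢; omega) ⁅z, t⁆, add_zero]

/-- Adjacent letters in the word can be swapped. -/
lemma lemSwap {n : ℕ}
    (IH : ∀ l : List L, l.length < n → ∀ t : L, ⁅x, wrapL l ⁅y, t⁆⁆ = 0)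
    (p m : List L) (u z : L) (hlen : (p ++ u :: z :: m).length = n) (t : L) :
    ⁅x, wrapL (p ++ u :: z :: m) ⁅y, t⁆⁆ = ⁅x, wrapL (p ++ z :: u :: m) ⁅y, t⁆⁆ := by
  have key : wrapL (p ++ u :: z :: m) ⁅y, t⁆ - wrapL (p ++ z :: u :: m) ⁅y, t⁆
      = wrapL (p ++ ⁅u, z⁆ :: m) ⁅y, t⁆ := by
    rw [wrapL_append, wrapL_append, wrapL_append, wrapL_cons, wrapL_cons, wrapL_cons,
      wrapL_cons, wrapL_cons, ← wrapL_sub, ← lie_lie]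
  rw [← sub_eq_zero, ← lie_sub, key]
  exact IH (p ++ ⁅u, z⁆ :: m) (by simp at hlen ⊢; omega) t

/-- Any letter can be moved to the front of the word. -/
lemma lemMove {n : ℕ}
    (IH : ∀ l : List L, l.length < n → ∀ t : L, ⁅x, wrapL l ⁅y, t⁆⁆ = 0) :
    ∀ (l₁ l₀ l₂ : List L) (z : L), (l₀ ++ l₁ ++ z :: l₂).length = n → ∀ t : L,
      ⁅x, wrapL (l₀ ++ l₁ ++ z :: l₂) ⁅y, t⁆⁆ = ⁅x, wrapL (l₀ ++ z :: (l₁ ++ l₂)) ⁅y, t⁆⁆ := by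
  intro l₁
  induction l₁ with
  | nil =>
    intro l₀ l₂ z _ t
    simp
  | cons u l₁' ih =>
    intro l₀ l₂ z hlen t
    have e1 : l₀ ++ (u :: l₁') ++ z :: l₂ = (l₀ ++ [u]) ++ l₁' ++ z :: l₂ := by simp
    have e2 : (l₀ ++ [u]) ++ z :: (l₁' ++ l₂) = l₀ ++ u :: z :: (l₁' ++ l₂) := by simp
    have e3 : l₀ ++ z :: ((u :: l₁') ++ l₂) = l₀ ++ z :: u :: (l₁' ++ l₂) := by simp
    rw [e1, ih (l₀ ++ [u]) l₂ z (by rw [← e1]; exact hlen) t, e2,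
      lemSwap IH l₀ (l₁' ++ l₂) u z (by simp at hlen ⊢; omega) t, e3]

end CoreLemmas

section Position

variable (Lg : G → Submodule Φ L)

/-- The decisive degree-comparison step. -/
lemma position (hdirect : DirectSum.IsInternal Lg)
    (hgrading : ∀ a b : G, ∀ x ∈ Lg a, ∀ y ∈ Lg b, ⁅x, y⁆ ∈ Lg (a * b))
    {n : ℕ} {a b : G} (hab : a * b ≠ b * a) {x y : L} (hx : x ∈ Lg a) (hy : y ∈ Lg b)
    (IH : ∀ l : List L, l.length < n → ∀ t : L, ⁅x, wrapL l ⁅y, t⁆⁆ = 0)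
    (IH' : ∀ l : List L, l.length < n → ∀ s : L, ⁅y, wrapL l ⁅x, s⁆⁆ = 0)
    (l₁ l₂ : List (L × G)) (hl : ∀ q ∈ l₁ ++ l₂, q.1 ∈ Lg q.2)
    (p : L × G) (hp : p.1 ∈ Lg p.2)
    (hn : (l₁ ++ p :: l₂).length = n)
    {k : G} {t : L} (ht : t ∈ Lg k)
    (hS : ⁅x, wrapL ((l₁ ++ p :: l₂).map Prod.fst) ⁅y, t⁆⁆ ≠ 0) :
    a * p.2 = p.2 * a ∧
      a * (((l₁ ++ l₂).map Prod.snd).prod * b) = (((l₁ ++ l₂).map Prod.snd).prod * b) * a := by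
  set lf : List L := (l₁ ++ l₂).map Prod.fst with hlf
  set v : L := wrapL lf y with hv
  set d : G := ((l₁ ++ l₂).map Prod.snd).prod * b with hd
  have hlen_lf : lf.length + 1 = n := by
    simp only [hlf, List.length_map, List.length_append]
    simp only [List.length_append, List.length_cons] at hn
    omega
  have hvmem : v ∈ Lg d := wrapL_mem Lg hgrading (l₁ ++ l₂) hl hy
  have hP1 : ∀ s : L, ⁅x, ⁅v, s⁆⁆ = 0 := by
    intro s
    have := lemB IH lf [] (by simp; omega) s
    simpa using this
  have hP2 : ∀ s : L, ⁅v, ⁅x, s⁆⁆ = 0 := by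
    intro s
    have := lemC IH' lf [] (by simp; omega) s
    simpa using this
  -- rewrite the original bracket as ⁅x, ⁅p.1, ⁅v, t⁆⁆⁆
  have map_fst : (l₁ ++ p :: l₂).map Prod.fst
      = l₁.map Prod.fst ++ p.1 :: l₂.map Prod.fst := by simp
  have hlen2 : (l₁.map Prod.fst ++ p.1 :: l₂.map Prod.fst).length = n := by
    rw [← map_fst]; simpa using hn
  have step1 : ⁅x, wrapL ((l₁ ++ p :: l₂).map Prod.fst) ⁅y, t⁆⁆
      = ⁅x, ⁅p.1, wrapL lf ⁅y, t⁆⁆⁆ := by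
    rw [map_fst]
    have := lemMove IH (l₁.map Prod.fst) [] (l₂.map Prod.fst) p.1
      (by simpa using hlen2) t
    simp only [List.nil_append] at this
    rw [this]
    have e : l₁.map Prod.fst ++ l₂.map Prod.fst = lf := by simp [hlf]
    rw [e, wrapL_cons]
  have step2 : ⁅x, ⁅p.1, wrapL lf ⁅y, t⁆⁆⁆ = ⁅x, ⁅p.1, ⁅v, t⁆⁆⁆ := by
    have h0 := lemE IH lf [p.1] (by simp; omega) t
    have h1 : wrapL [p.1] (wrapL lf ⁅y, t⁆ - ⁅wrapL lf y, t⁆)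
        = ⁅p.1, wrapL lf ⁅y, t⁆⁆ - ⁅p.1, ⁅v, t⁆⁆ := by
      rw [wrapL_cons, wrapL_nil, lie_sub, hv]
    rw [h1] at h0
    rw [lie_sub, sub_eq_zero] at h0
    exact h0
  set S : L := ⁅x, ⁅p.1, ⁅v, t⁆⁆⁆ with hSdef
  have hS' : S ≠ 0 := by
    rw [step1, step2] at hS
    exact hS
  -- three homogeneous memberships
  have m0 : S ∈ Lg (a * (p.2 * (d * k))) :=
    hgrading _ _ x hx _ (hgrading _ _ p.1 hp _ (hgrading _ _ v hvmem t ht))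
  have m1 : S ∈ Lg ((p.2 * d) * (a * k)) := by
    have e : S = ⁅⁅p.1, v⁆, ⁅x, t⁆⁆ := hSdef.trans (key_eq1 x v p.1 t hP1)
    rw [e]
    exact hgrading _ _ _ (hgrading _ _ p.1 hp v hvmem) _ (hgrading _ _ x hx t ht)
  have m2 : S ∈ Lg ((p.2 * a) * (d * k)) := by
    have e : S = -⁅⁅p.1, x⁆, ⁅v, t⁆⁆ :=
      hSdef.trans ((key_eq1 x v p.1 t hP1).trans (key_eq2 x v p.1 t hP2))
    rw [e]
    exact neg_mem (hgrading _ _ _ (hgrading _ _ p.1 hp x hx) _ (hgrading _ _ v hvmem t ht))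
  -- degree equalities
  have c2 : a * (p.2 * (d * k)) = (p.2 * a) * (d * k) := by
    by_contra hne
    exact hS' (homog_unique Lg hdirect hne m0 m2)
  have hpa : a * p.2 = p.2 * a := by
    have : (a * p.2) * (d * k) = (p.2 * a) * (d * k) := by
      rw [mul_assoc]; exact c2
    exact mul_right_cancel this
  have c1 : a * (p.2 * (d * k)) = (p.2 * d) * (a * k) := by
    by_contra hne
    exact hS' (homog_unique Lg hdirect hne m0 m1)
  have had : a * d = d * a := by
    have h1 : ((a * p.2) * d) * k = ((p.2 * d) * a) * k := by
      simpa only [mul_assoc] using c1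
    have h2 : (a * p.2) * d = (p.2 * d) * a := mul_right_cancel h1
    rw [hpa] at h2
    have h3 : p.2 * (a * d) = p.2 * (d * a) := by
      simpa only [mul_assoc] using h2
    exact mul_left_cancel h3
  exact ⟨hpa, had⟩

/-- The main statement, proved by strong induction. -/
theorem mainStmt_all (hdirect : DirectSum.IsInternal Lg)
    (hgrading : ∀ a b : G, ∀ x ∈ Lg a, ∀ y ∈ Lg b, ⁅x, y⁆ ∈ Lg (a * b)) :
    ∀ n : ℕ, MainStmt Lg n := by
  intro n
  induction n using Nat.strong_induction_on with
  | _ n IH =>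
  intro a b hab x hx y hy l hl hlen t
  have IHfull : ∀ a' b' : G, a' * b' ≠ b' * a' → ∀ x' ∈ Lg a', ∀ y' ∈ Lg b',
      ∀ l' : List L, l'.length < n → ∀ t' : L, ⁅x', wrapL l' ⁅y', t'⁆⁆ = 0 := by
    intro a' b' hab' x' hx' y' hy' l' hl' t'
    exact mainStmt_ext Lg hdirect (IH l'.length hl') hab' hx' hy' l' rfl t'
  have IHx : ∀ l' : List L, l'.length < n → ∀ t' : L, ⁅x, wrapL l' ⁅y, t'⁆⁆ = 0 :=
    IHfull a b hab x hx y hy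
  have IHy : ∀ l' : List L, l'.length < n → ∀ s : L, ⁅y, wrapL l' ⁅x, s⁆⁆ = 0 :=
    IHfull b a (fun h => hab h.symm) y hy x hx
  -- first prove it for homogeneous t
  have core : ∀ (k : G), ∀ t' ∈ Lg k, ⁅x, wrapL l ⁅y, t'⁆⁆ = 0 := by
    intro k t' ht'
    obtain ⟨lp, hmap, hlp⟩ := choosePairs Lg l hl
    rw [← hmap] at hlen ⊢
    cases lp with
    | nil =>
      -- base case : ⁅x, ⁅y, t'⁆⁆ = 0
      simp only [List.map_nil, wrapL_nil]
      have hm1 : ⁅x, y⁆ ∈ Lg (a * b) := hgrading _ _ x hx y hy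
      have hm2 : ⁅x, y⁆ ∈ Lg (b * a) := by
        have h1 : ⁅x, y⁆ = -⁅y, x⁆ := (lie_skew x y).symm
        rw [h1]
        exact neg_mem (hgrading _ _ y hy x hx)
      have hxy : ⁅x, y⁆ = 0 := homog_unique Lg hdirect hab hm1 hm2
      have hrw : ⁅x, ⁅y, t'⁆⁆ = ⁅y, ⁅x, t'⁆⁆ := by
        rw [leibniz_lie, hxy, zero_lie, zero_add]
      have hα : ⁅x, ⁅y, t'⁆⁆ ∈ Lg (a * (b * k)) :=
        hgrading _ _ x hx _ (hgrading _ _ y hy t' ht')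
      have hβ : ⁅x, ⁅y, t'⁆⁆ ∈ Lg (b * (a * k)) := by
        rw [hrw]
        exact hgrading _ _ y hy _ (hgrading _ _ x hx t' ht')
      have hne : a * (b * k) ≠ b * (a * k) := by
        intro h
        apply hab
        have : (a * b) * k = (b * a) * k := by
          simpa only [mul_assoc] using h
        exact mul_right_cancel this
      exact homog_unique Lg hdirect hne hα hβ
    | cons p lp' =>
      by_contra hS
      have hcomm : ∀ q ∈ p :: lp', a * q.2 = q.2 * a := by
        intro q hq
        obtain ⟨u, w, huw⟩ := List.append_of_mem hq
        rw [huw] at hS hlp hlen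
        have hl' : ∀ r ∈ u ++ w, r.1 ∈ Lg r.2 := by
          intro r hr
          apply hlp
          rcases List.mem_append.mp hr with hr | hr
          · exact List.mem_append.mpr (Or.inl hr)
          · exact List.mem_append.mpr (Or.inr (List.mem_cons_of_mem _ hr))
        have hq' : q.1 ∈ Lg q.2 := hlp q (List.mem_append.mpr (Or.inr (List.mem_cons_self (a := q) (l := w))))
        exact (position Lg hdirect hgrading hab hx hy IHx IHy u w hl' q hq'
          (by simpa using hlen) ht' hS).1
      have hd : a * ((lp'.map Prod.snd).prod * b) = ((lp'.map Prod.snd).prod * b) * a := by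
        have hl' : ∀ r ∈ ([] : List (L × G)) ++ lp', r.1 ∈ Lg r.2 := by
          intro r hr
          exact hlp r (List.mem_cons_of_mem _ (by simpa using hr))
        have hp' : p.1 ∈ Lg p.2 := hlp p (List.mem_cons_self (a := p) (l := lp'))
        have := (position Lg hdirect hgrading hab hx hy IHx IHy [] lp' hl' p hp'
          (by simpa using hlen) ht' (by simpa using hS)).2
        simpa using this
      have hPa : Commute a (lp'.map Prod.snd).prod := by
        apply Commute.list_prod_right
        intro q hq
        obtain ⟨r, hr, rfl⟩ := List.mem_map.mp hq
        exact hcomm r (List.mem_cons_of_mem _ hr)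
      set P : G := (lp'.map Prod.snd).prod with hP
      have h1 : P * (a * b) = P * (b * a) := by
        calc P * (a * b) = (P * a) * b := by rw [mul_assoc]
        _ = (a * P) * b := by rw [hPa.eq]
        _ = a * (P * b) := by rw [mul_assoc]
        _ = (P * b) * a := hd
        _ = P * (b * a) := by rw [mul_assoc]
      exact hab (mul_left_cancel h1)
  -- now extend to arbitrary t
  refine homog_induction Lg hdirect (p := fun t' => ⁅x, wrapL l ⁅y, t'⁆⁆ = 0)
    (fun k t' ht' => core k t' ht') ?_ ?_ t
  · simp
  · intro u v hu hv
    rw [lie_add, wrapL_add, lie_add, hu, hv, add_zero]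

end Position

end LieGradedCommAux

open LieGradedCommAux in
/-- If `L` is a Lie algebra over a commutative ring `Φ` with `2` invertible, graded by a
group `G`, and `g g' ≠ g' g`, then the Lie ideals of `L` generated by `L_g` and by `L_{g'}`
commute: `⁅I, J⁆ = 0`. -/
theorem lieIdeal_bracket_eq_bot_of_not_commute
    {Φ L G : Type*} [CommRing Φ] [Invertible (2 : Φ)]
    [LieRing L] [LieAlgebra Φ L] [Group G] [DecidableEq G]
    (Lg : G → Submodule Φ L)
    (hdirect : DirectSum.IsInternal Lg)
    (hgrading : ∀ a b : G, ∀ x ∈ Lg a, ∀ y ∈ Lg b, ⁅x, y⁆ ∈ Lg (a * b))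
    (g g' : G) (hne : g * g' ≠ g' * g) :
    ⁅LieSubmodule.lieSpan Φ L (Lg g : Set L),
      LieSubmodule.lieSpan Φ L (Lg g' : Set L)⁆ = (⊥ : LieIdeal Φ L) := by
  -- x ∈ Lg g kills all iterated brackets over elements of Lg g'
  have bigK : ∀ x ∈ Lg g, ∀ y ∈ Lg g', ∀ (l : List L) (t : L),
      ⁅x, wrapL l ⁅y, t⁆⁆ = 0 := by
    intro x hx y hy l t
    exact mainStmt_ext Lg hdirect (mainStmt_all Lg hdirect hgrading l.length)
      hne hx hy l rfl t
  have hxy0 : ∀ x ∈ Lg g, ∀ y ∈ Lg g', ⁅x, y⁆ = 0 := by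
    intro x hx y hy
    have hm1 : ⁅x, y⁆ ∈ Lg (g * g') := hgrading _ _ x hx y hy
    have hm2 : ⁅x, y⁆ ∈ Lg (g' * g) := by
      have h1 : ⁅x, y⁆ = -⁅y, x⁆ := (lie_skew x y).symm
      rw [h1]
      exact neg_mem (hgrading _ _ y hy x hx)
    exact homog_unique Lg hdirect hne hm1 hm2
  -- the centralizer property : every x ∈ Lg g kills the whole ideal J
  have centY : ∀ x ∈ Lg g, ∀ v ∈ LieSubmodule.lieSpan Φ L (Lg g' : Set L), ⁅x, v⁆ = 0 := by
    intro x hx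
    let N : LieSubmodule Φ L L :=
      { carrier := {v : L | (∀ (l : List L) (t : L), ⁅x, wrapL l ⁅v, t⁆⁆ = 0) ∧
          ∀ l : List L, ⁅x, wrapL l v⁆ = 0}
        add_mem' := by
          rintro u v ⟨hu1, hu2⟩ ⟨hv1, hv2⟩
          constructor
          · intro l t
            rw [add_lie, wrapL_add, lie_add, hu1 l t, hv1 l t, add_zero]
          · intro l
            rw [wrapL_add, lie_add, hu2 l, hv2 l, add_zero]
        zero_mem' := by
          constructor
          · intro l t; simp
          · intro l; simp
        smul_mem' := by
          rintro r v ⟨hv1, hv2⟩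
          constructor
          · intro l t
            rw [smul_lie, wrapL_smul, lie_smul, hv1 l t, smul_zero]
          · intro l
            rw [wrapL_smul, lie_smul, hv2 l, smul_zero]
        lie_mem := by
          rintro z v ⟨hv1, hv2⟩
          constructor
          · intro l t
            have h1 : ⁅⁅z, v⁆, t⁆ = ⁅z, ⁅v, t⁆⁆ - ⁅v, ⁅z, t⁆⁆ := lie_lie z v t
            have h2 : wrapL l ⁅z, ⁅v, t⁆⁆ = wrapL (l ++ [z]) ⁅v, t⁆ := by
              rw [wrapL_append]; rfl
            rw [h1, wrapL_sub, lie_sub, h2, hv1 (l ++ [z]) t, hv1 l ⁅z, t⁆, sub_zero]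
          · intro l
            have h2 : wrapL l ⁅z, v⁆ = wrapL (l ++ [z]) v := by
              rw [wrapL_append]; rfl
            rw [h2, hv2 (l ++ [z])] }
    have hsub : (Lg g' : Set L) ⊆ N := by
      intro y hy
      constructor
      · intro l t
        exact bigK x hx y hy l t
      · intro l
        induction l using List.reverseRecOn with
        | nil => exact hxy0 x hx y hy
        | append_singleton l' z _ =>
          have h1 : wrapL (l' ++ [z]) y = wrapL l' ⁅z, y⁆ := by
            rw [wrapL_append]; rfl
          have h2 : (⁅z, y⁆ : L) = -⁅y, z⁆ := (lie_skew z y).symm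
          rw [h1, h2, wrapL_neg, lie_neg, bigK x hx y hy l' z, neg_zero]
    have hle : LieSubmodule.lieSpan Φ L (Lg g' : Set L) ≤ N :=
      (LieSubmodule.lieSpan_le).mpr hsub
    intro v hv
    have hvN := hle hv
    have := hvN.2 []
    simpa using this
  -- the centralizer of J is a Lie ideal containing Lg g
  set J := LieSubmodule.lieSpan Φ L (Lg g' : Set L) with hJ
  let C : LieSubmodule Φ L L :=
    { carrier := {u : L | ∀ v ∈ J, ⁅u, v⁆ = 0}
      add_mem' := by
        intro u u' hu hu' v hv
        rw [add_lie, hu v hv, hu' v hv, add_zero]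
      zero_mem' := by
        intro v hv; simp
      smul_mem' := by
        intro r u hu v hv
        rw [smul_lie, hu v hv, smul_zero]
      lie_mem := by
        intro z u hu v hv
        have h1 : ⁅⁅z, u⁆, v⁆ = ⁅z, ⁅u, v⁆⁆ - ⁅u, ⁅z, v⁆⁆ := lie_lie z u v
        rw [h1, hu v hv, lie_zero, zero_sub, hu ⁅z, v⁆ (J.lie_mem hv), neg_zero] }
  have hgC : (Lg g : Set L) ⊆ C := by
    intro x hx v hv
    exact centY x hx v hv
  have hleI : LieSubmodule.lieSpan Φ L (Lg g : Set L) ≤ C :=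
    (LieSubmodule.lieSpan_le).mpr hgC
  rw [LieSubmodule.lie_eq_bot_iff]
  intro u hu m hm
  exact (hleI hu) m hm
end

section
/- Let L be a Lie algebra over a commutative ring Φ in which 2 is invertible, graded by a group G. Assume L is graded-prime, i.e. there are no nonzero graded ideals I, J of L with [I, J] = 0, and assume G is generated by the support of L, i.e. by the set of all g ∈ G with L_g ≠ 0. Then G is an abelian group. -/
/-- The linear map `y ↦ ⁅x, y⁆`. -/
private def bracketLeftLin {Φ L : Type*} [CommRing Φ] [LieRing L] [LieAlgebra Φ L] (x : L) :
    L →ₗ[Φ] L where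
  toFun y := ⁅x, y⁆
  map_add' := lie_add x
  map_smul' c y := lie_smul c x y

/-- The linear map `y ↦ ⁅y, x⁆`. -/
private def bracketRightLin {Φ L : Type*} [CommRing Φ] [LieRing L] [LieAlgebra Φ L] (x : L) :
    L →ₗ[Φ] L where
  toFun y := ⁅y, x⁆
  map_add' a b := add_lie a b x
  map_smul' c y := smul_lie c y x

/-- A Lie ideal `I` of a `G`-graded Lie algebra is graded if `I = ⊕_{g ∈ G} (I ∩ L_g)`. -/
def LieIdeal.IsGraded {Φ L G : Type*} [CommRing Φ] [LieRing L] [LieAlgebra Φ L]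
    (Lg : G → Submodule Φ L) (I : LieIdeal Φ L) : Prop :=
  (I : Submodule Φ L) = ⨆ g : G, (I : Submodule Φ L) ⊓ Lg g

/-- If `L` is a Lie algebra over a commutative ring `Φ` with `2` invertible, graded by a
group `G`, `L` is graded-prime (no nonzero graded ideals `I, J` with `⁅I, J⁆ = 0`), and `G`
is generated by the support of `L`, then `G` is abelian. -/
theorem mul_comm_of_gradedPrime
    {Φ L G : Type*} [CommRing Φ] [Invertible (2 : Φ)]
    [LieRing L] [LieAlgebra Φ L] [Group G] [DecidableEq G]
    (Lg : G → Submodule Φ L)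
    (hdirect : DirectSum.IsInternal Lg)
    (hgrading : ∀ a b : G, ∀ x ∈ Lg a, ∀ y ∈ Lg b, ⁅x, y⁆ ∈ Lg (a * b))
    (hprime : ¬ ∃ I J : LieIdeal Φ L, I ≠ ⊥ ∧ J ≠ ⊥ ∧
      LieIdeal.IsGraded Lg I ∧ LieIdeal.IsGraded Lg J ∧ ⁅I, J⁆ = (⊥ : LieIdeal Φ L))
    (hsupp : Subgroup.closure {g : G | Lg g ≠ ⊥} = ⊤) :
    ∀ a b : G, a * b = b * a := by
  classical
  letI : DirectSum.Decomposition Lg := hdirect.chooseDecomposition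
  have htop : (⨆ u, Lg u) = ⊤ := hdirect.submodule_iSup_eq_top
  -- the component maps as linear maps
  set cmp : G → (L →ₗ[Φ] L) := fun u =>
    (Lg u).subtype ∘ₗ (DFinsupp.lapply u) ∘ₗ (DirectSum.decomposeLinearEquiv Lg).toLinearMap
    with hcmp
  have cmp_apply : ∀ u (x : L), cmp u x = (DirectSum.decompose Lg x u : L) := fun u x => rfl
  -- brackets of components with non-commuting degrees vanish
  have hzero : ∀ a b : G, a * b ≠ b * a → ∀ x ∈ Lg a, ∀ y ∈ Lg b, ⁅x, y⁆ = 0 := by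
    intro a b hab x hx y hy
    have h1 := hgrading a b x hx y hy
    have h2 : ⁅x, y⁆ ∈ Lg (b * a) := by
      have h3 := Submodule.neg_mem _ (hgrading b a y hy x hx)
      rwa [lie_skew] at h3
    exact (Submodule.disjoint_def.mp
      (hdirect.submodule_iSupIndep.pairwiseDisjoint hab)) _ h1 h2
  -- bracketing a homogeneous element against a component
  have hdec_br : ∀ (s : G) (z : L), z ∈ Lg s → ∀ (u : G) (x : L),
      ⁅z, (DirectSum.decompose Lg x u : L)⁆ = (DirectSum.decompose Lg ⁅z, x⁆ (s * u) : L) := by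
    intro s z hz u x
    have hext : (⨆ v, Lg v) ≤
        LinearMap.ker (bracketLeftLin z ∘ₗ cmp u - cmp (s * u) ∘ₗ bracketLeftLin z) := by
      refine iSup_le fun v => fun w hw => ?_
      rw [LinearMap.mem_ker, LinearMap.sub_apply, sub_eq_zero]
      show ⁅z, (DirectSum.decompose Lg w u : L)⁆ = (DirectSum.decompose Lg ⁅z, w⁆ (s * u) : L)
      by_cases huv : u = v
      · subst huv
        rw [DirectSum.decompose_of_mem_same Lg hw,
          DirectSum.decompose_of_mem_same Lg (hgrading s u z hz w hw)]
      · rw [DirectSum.decompose_of_mem_ne Lg hw (Ne.symm huv), lie_zero,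
          DirectSum.decompose_of_mem_ne Lg (hgrading s v z hz w hw)
            (fun hc => huv (mul_left_cancel hc).symm)]
    have hx : x ∈ LinearMap.ker (bracketLeftLin z ∘ₗ cmp u - cmp (s * u) ∘ₗ bracketLeftLin z) :=
      hext (htop ▸ Submodule.mem_top)
    rw [LinearMap.mem_ker, LinearMap.sub_apply, sub_eq_zero] at hx
    exact hx
  -- components supported in S for elements of ⨆_{u ∈ S} L_u
  have hcomp_zero : ∀ (S : Set G) (x : L), x ∈ (⨆ u ∈ S, Lg u) → ∀ u ∉ S,
      (DirectSum.decompose Lg x u : L) = 0 := by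
    intro S x hx u hu
    have hle : (⨆ v ∈ S, Lg v) ≤ LinearMap.ker (cmp u) := by
      refine iSup₂_le fun v hv => fun z hz => ?_
      rw [LinearMap.mem_ker, cmp_apply]
      exact DirectSum.decompose_of_mem_ne Lg hz (show v ≠ u from fun hh => hu (hh ▸ hv))
    have := hle hx
    rwa [LinearMap.mem_ker, cmp_apply] at this
  -- reducing "brackets with all of ⨆_{s ∈ S} L_s vanish" to homogeneous elements
  have hbrS : ∀ (S : Set G) (x : L), (∀ s ∈ S, ∀ z ∈ Lg s, ⁅x, z⁆ = 0) →
      ∀ n ∈ (⨆ s ∈ S, Lg s), ⁅x, n⁆ = 0 := by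
    intro S x hx n hn
    have hle : (⨆ s ∈ S, Lg s) ≤ LinearMap.ker (bracketLeftLin x) :=
      iSup₂_le fun s hs => fun z hz => hx s hs z hz
    exact hle hn
  -- THE KEY STEP: support elements commute
  have key : ∀ g h : G, Lg g ≠ ⊥ → Lg h ≠ ⊥ → g * h = h * g := by
    intro g h hgne hhne
    by_contra hgh
    apply hprime
    set C : Set G := {u | g * u = u * g} with hC
    have hCg : g ∈ C := rfl
    have hCmul : ∀ {w u : G}, w ∈ C → u ∈ C → w * u ∈ C := by
      intro w u hw hu
      show g * (w * u) = (w * u) * g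
      rw [← mul_assoc, hw, mul_assoc, hu, mul_assoc]
    have hCinv : ∀ {w : G}, w ∈ C → w⁻¹ ∈ C := by
      intro w hw
      show g * w⁻¹ = w⁻¹ * g
      rw [eq_comm, inv_mul_eq_iff_eq_mul, ← mul_assoc, ← hw, mul_assoc, mul_inv_cancel, mul_one]
    have hCdivl : ∀ {w u : G}, w ∈ C → w * u ∈ C → u ∈ C := by
      intro w u hw hwu
      have := hCmul (hCinv hw) hwu
      rwa [← mul_assoc, inv_mul_cancel, one_mul] at this
    have hh : h ∉ C := hgh
    set M : Submodule Φ L := ⨆ u ∈ C, Lg u with hM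
    set N : Submodule Φ L := ⨆ u ∈ Cᶜ, Lg u with hN
    have hLM : ∀ {u : G}, u ∈ C → Lg u ≤ M := fun {u} hu =>
      le_iSup₂ (f := fun u (_ : u ∈ C) => Lg u) u hu
    have hLN : ∀ {u : G}, u ∉ C → Lg u ≤ N := fun {u} hu =>
      le_iSup₂ (f := fun u (_ : u ∈ Cᶜ) => Lg u) u hu
    -- the centralizer of N
    set CentN : Submodule Φ L :=
      { carrier := {x | ∀ n ∈ N, ⁅x, n⁆ = 0}
        add_mem' := fun {a b} ha hb n hn => by rw [add_lie, ha n hn, hb n hn, add_zero]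
        zero_mem' := fun n hn => zero_lie n
        smul_mem' := fun c x hx n hn => by rw [smul_lie, hx n hn, smul_zero] } with hCentN
    have memCentN : ∀ x : L, (∀ s ∉ C, ∀ z ∈ Lg s, ⁅x, z⁆ = 0) → x ∈ CentN := by
      intro x hx n hn
      exact hbrS Cᶜ x (fun s hs z hz => hx s hs z hz) n hn
    set K₀ : Submodule Φ L := CentN ⊓ M with hK₀
    have hCentN_apply : ∀ x ∈ K₀, ∀ n ∈ N, ⁅x, n⁆ = 0 := fun x hx => hx.1
    -- K₀ is a Lie ideal
    have hK₀lie : ∀ (y x : L), x ∈ K₀ → ⁅y, x⁆ ∈ K₀ := by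
      intro y x hx
      have hle : (⨆ w, Lg w) ≤ Submodule.comap (bracketRightLin x) K₀ := by
        refine iSup_le fun w => fun y hy => ?_
        show ⁅y, x⁆ ∈ K₀
        by_cases hw : w ∈ C
        · refine ⟨?_, ?_⟩
          · -- ⁅y, x⁆ centralizes N
            refine memCentN _ fun s hs z hz => ?_
            have h1 : ⁅x, z⁆ = 0 := hx.1 z (hLN hs hz)
            have h2 : ⁅x, ⁅y, z⁆⁆ = 0 := by
              refine hx.1 _ (hLN (fun hc => hs (hCdivl hw hc)) (hgrading w s y hy z hz))
            rw [lie_lie, h1, lie_zero, h2, sub_zero]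
          · -- ⁅y, x⁆ ∈ M
            have hle2 : M ≤ Submodule.comap (bracketLeftLin y) M := by
              refine iSup₂_le fun u hu => fun z hz => ?_
              exact hLM (hCmul hw hu) (hgrading w u y hy z hz)
            exact hle2 hx.2
        · have h0 : ⁅x, y⁆ = 0 := hx.1 y (hLN hw hy)
          have : ⁅y, x⁆ = 0 := by rw [← lie_skew, h0, neg_zero]
          rw [this]; exact K₀.zero_mem
      exact hle (htop ▸ Submodule.mem_top) 
    set K : LieIdeal Φ L := { toSubmodule := K₀, lie_mem := fun {y x} hx => hK₀lie y x hx }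
      with hK
    have hKcoe : (K : Submodule Φ L) = K₀ := rfl
    -- L_g ≤ K
    have hLgK : Lg g ≤ K₀ := by
      intro x hx
      refine ⟨memCentN _ fun s hs z hz => hzero g s hs x hx z hz, hLM hCg hx⟩
    -- gradedness of K
    have hKgr : LieIdeal.IsGraded Lg K := by
      refine le_antisymm ?_ (iSup_le fun u => inf_le_left)
      intro x hx
      rw [← DirectSum.sum_support_decompose Lg x]
      refine Submodule.sum_mem _ fun u hu => ?_
      refine le_iSup (fun u => (K : Submodule Φ L) ⊓ Lg u) u ?_
      refine ⟨⟨?_, ?_⟩, SetLike.coe_mem _⟩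
      · -- component centralizes N
        refine memCentN _ fun s hs z hz => ?_
        have h1 : ⁅z, x⁆ = 0 := by
          rw [← lie_skew, hx.1 z (hLN hs hz), neg_zero]
        have h2 := hdec_br s z hz u x
        rw [h1] at h2
        simp only [DirectSum.decompose_zero] at h2
        rw [← lie_skew, h2]
        simp
      · -- component in M
        by_cases hu' : u ∈ C
        · exact hLM hu' (SetLike.coe_mem _)
        · rw [hcomp_zero C x hx.2 u hu']
          exact M.zero_mem
    have hKne : K ≠ ⊥ := by
      intro hbot
      apply hgne
      rw [eq_bot_iff]
      intro z hz
      have h1 : z ∈ K := hLgK hz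
      rw [hbot, LieSubmodule.mem_bot] at h1
      simpa [h1] using Submodule.zero_mem ⊥
    -- J := the centralizer of K
    set J₀ : Submodule Φ L :=
      { carrier := {x | ∀ k ∈ K₀, ⁅k, x⁆ = 0}
        add_mem' := fun {a b} ha hb k hk => by rw [lie_add, ha k hk, hb k hk, add_zero]
        zero_mem' := fun k hk => lie_zero k
        smul_mem' := fun c x hx k hk => by rw [lie_smul, hx k hk, smul_zero] } with hJ₀
    have hJ₀lie : ∀ (y x : L), x ∈ J₀ → ⁅y, x⁆ ∈ J₀ := by
      intro y x hx k hk
      have h1 : ⁅k, y⁆ ∈ K₀ := by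
        rw [← lie_skew]
        exact K₀.neg_mem (hK₀lie y k hk)
      rw [leibniz_lie, hx k hk, lie_zero, add_zero, hx _ h1]
    set J : LieIdeal Φ L := { toSubmodule := J₀, lie_mem := fun {y x} hx => hJ₀lie y x hx }
      with hJ
    have hLhJ : Lg h ≤ J₀ := by
      intro x hx k hk
      exact hk.1 x (hLN hh hx)
    have hJne : J ≠ ⊥ := by
      intro hbot
      apply hhne
      rw [eq_bot_iff]
      intro z hz
      have h1 : z ∈ J := hLhJ hz
      rw [hbot, LieSubmodule.mem_bot] at h1
      simpa [h1] using Submodule.zero_mem ⊥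
    -- gradedness of J
    have hJgr : LieIdeal.IsGraded Lg J := by
      refine le_antisymm ?_ (iSup_le fun u => inf_le_left)
      intro x hx
      rw [← DirectSum.sum_support_decompose Lg x]
      refine Submodule.sum_mem _ fun u hu => ?_
      refine le_iSup (fun u => (J : Submodule Φ L) ⊓ Lg u) u ?_
      refine ⟨?_, SetLike.coe_mem _⟩
      intro k hk
      have hk' : k ∈ ⨆ t, (K : Submodule Φ L) ⊓ Lg t := by
        rw [← hKgr]; exact hk
      have hle : (⨆ t, (K : Submodule Φ L) ⊓ Lg t) ≤
          LinearMap.ker (bracketRightLin ((DirectSum.decompose Lg x u : L))) := by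
        refine iSup_le fun t => fun k hk => ?_
        show ⁅k, (DirectSum.decompose Lg x u : L)⁆ = 0
        rw [hdec_br t k hk.2 u x, hx k hk.1]
        simp
      exact hle hk'
    -- the bracket ⁅K, J⁆ vanishes
    have hKJ : ⁅K, J⁆ = (⊥ : LieIdeal Φ L) := by
      rw [LieSubmodule.lie_eq_bot_iff]
      intro k hk m hm
      exact hm k hk
    exact ⟨K, J, hKne, hJne, hKgr, hJgr, hKJ⟩
  -- From pairwise commuting generators conclude that `G` is abelian.
  intro a b
  have hcomm1 : ∀ c ∈ {g : G | Lg g ≠ ⊥}, ∀ d : G, c * d = d * c := by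
    intro c hc d
    have hle : Subgroup.closure {g : G | Lg g ≠ ⊥} ≤ Subgroup.centralizer {c} := by
      rw [Subgroup.closure_le]
      intro s hs
      rw [SetLike.mem_coe, Subgroup.mem_centralizer_iff]
      intro m hm
      rw [Set.mem_singleton_iff] at hm
      rw [hm]
      exact key c s hc hs
    have hd : d ∈ Subgroup.centralizer {c} := hle (hsupp ▸ Subgroup.mem_top d)
    exact Subgroup.mem_centralizer_iff.mp hd c (Set.mem_singleton c)
  have hle : Subgroup.closure {g : G | Lg g ≠ ⊥} ≤ Subgroup.centralizer {b} := by
    rw [Subgroup.closure_le]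
    intro s hs
    rw [SetLike.mem_coe, Subgroup.mem_centralizer_iff]
    intro m hm
    rw [Set.mem_singleton_iff] at hm
    rw [hm]
    exact (hcomm1 s hs b).symm
  have ha : a ∈ Subgroup.centralizer {b} := hle (hsupp ▸ Subgroup.mem_top a)
  exact (Subgroup.mem_centralizer_iff.mp ha b (Set.mem_singleton b)).symm
end

section
/- Let L be a Lie algebra over a commutative ring Φ in which 2 is invertible, graded by a group G. If L is simple (as a Lie algebra) and G is generated by the support of L, i.e. by the set of all g ∈ G with L_g ≠ 0, then G is an abelian group. -/
/-- If `L` is a simple Lie algebra over a commutative ring `Φ` with `2` invertible, graded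
by a group `G` that is generated by the support of `L`, then `G` is abelian. -/
theorem mul_comm_of_isSimple
    {Φ L G : Type*} [CommRing Φ] [Invertible (2 : Φ)]
    [LieRing L] [LieAlgebra Φ L] [Group G] [DecidableEq G]
    (Lg : G → Submodule Φ L)
    (hdirect : DirectSum.IsInternal Lg)
    (hgrading : ∀ a b : G, ∀ x ∈ Lg a, ∀ y ∈ Lg b, ⁅x, y⁆ ∈ Lg (a * b))
    (hsimple : LieAlgebra.IsSimple Φ L)
    (hsupp : Subgroup.closure {g : G | Lg g ≠ ⊥} = ⊤) :
    ∀ a b : G, a * b = b * a := by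
  classical
  have hind := hdirect.submodule_iSupIndep
  have htop := hdirect.submodule_iSup_eq_top
  set S : Set G := {g : G | Lg g ≠ ⊥} with hS
  -- brackets between components of non-commuting degrees vanish
  have hzero : ∀ g h : G, g * h ≠ h * g → ∀ x ∈ Lg g, ∀ y ∈ Lg h, ⁅x, y⁆ = 0 := by
    intro g h hne x hx y hy
    have h1 : ⁅x, y⁆ ∈ Lg (g * h) := hgrading _ _ x hx y hy
    have h2 : ⁅x, y⁆ ∈ Lg (h * g) := by
      have h3 : -⁅y, x⁆ ∈ Lg (h * g) := Submodule.neg_mem _ (hgrading _ _ y hy x hx)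
      rwa [lie_skew] at h3
    have hdisj : Disjoint (Lg (g * h)) (Lg (h * g)) := hind.pairwiseDisjoint hne
    exact Submodule.disjoint_def.mp hdisj _ h1 h2
  -- support elements pairwise commute
  have key : ∀ a b : G, Lg a ≠ ⊥ → Lg b ≠ ⊥ → a * b = b * a := by
    intro a b ha hb
    by_contra hab
    -- the centralizer condition
    set C : G → Prop := fun g => g * a = a * g with hC
    have hCmul : ∀ {g h : G}, C g → C h → C (g * h) := by
      intro g h hg hh
      show g * h * a = a * (g * h)
      rw [mul_assoc, hh, ← mul_assoc, hg, mul_assoc]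
    have hCcancel : ∀ {g h : G}, C g → C (g * h) → C h := by
      intro g h hg hgh
      have : g * (h * a) = g * (a * h) := by
        have h1 : g * h * a = a * (g * h) := hgh
        rw [mul_assoc] at h1
        rw [h1, ← mul_assoc, ← hg, mul_assoc]
      exact mul_left_cancel this
    have hCcancel' : ∀ {g h : G}, C h → C (g * h) → C g := by
      intro g h hh hgh
      have h1 : g * h * a = a * (g * h) := hgh
      rw [mul_assoc, hh, ← mul_assoc, ← mul_assoc] at h1
      exact mul_right_cancel h1
    have hCb : ¬ C b := fun h => hab h.symm
    -- the spanning set of the ideal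
    set T : Set L := {x | (∃ g, ¬ C g ∧ x ∈ Lg g) ∨
      (∃ h k y z, ¬ C h ∧ ¬ C k ∧ C (h * k) ∧ y ∈ Lg h ∧ z ∈ Lg k ∧ x = ⁅y, z⁆)} with hT
    set Pm : Submodule Φ L := Submodule.span Φ T with hPm
    -- core: brackets of homogeneous elements with elements of T stay in Pm
    have core : ∀ (t : G) (x : L), x ∈ Lg t → ∀ m ∈ T, ⁅x, m⁆ ∈ Pm := by
      intro t x hx m hm
      rcases hm with ⟨g, hg, hmg⟩ | ⟨h, k, y, z, hh, hk, hhk, hy, hz, rfl⟩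
      · by_cases hCtg : C (t * g)
        · have hCt : ¬ C t := fun hCt => hg (hCcancel hCt hCtg)
          exact Submodule.subset_span (Or.inr ⟨t, g, x, m, hCt, hg, hCtg, hx, hmg, rfl⟩)
        · exact Submodule.subset_span (Or.inl ⟨t * g, hCtg, hgrading _ _ x hx m hmg⟩)
      · have hmhk : ⁅y, z⁆ ∈ Lg (h * k) := hgrading _ _ y hy z hz
        by_cases hCt : C t
        · rw [leibniz_lie]
          refine Submodule.add_mem _ ?_ ?_
          · have hCth : ¬ C (t * h) := fun hcth => hh (hCcancel hCt hcth)
            have hCthk : C (t * h * k) := by rw [mul_assoc]; exact hCmul hCt hhk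
            exact Submodule.subset_span
              (Or.inr ⟨t * h, k, ⁅x, y⁆, z, hCth, hk, hCthk, hgrading _ _ x hx y hy, hz, rfl⟩)
          · by_cases hcom : t * k = k * t
            · have hCtk : ¬ C (t * k) := fun hctk => hk (hCcancel hCt hctk)
              have hChtk : C (h * (t * k)) := by
                rw [hcom, ← mul_assoc]; exact hCmul hhk hCt
              exact Submodule.subset_span
                (Or.inr ⟨h, t * k, y, ⁅x, z⁆, hh, hCtk, hChtk, hy, hgrading _ _ x hx z hz, rfl⟩)
            · rw [hzero t k hcom x hx z hz, lie_zero]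
              exact Submodule.zero_mem _
        · have hCthk : ¬ C (t * (h * k)) := fun hcthk => hCt (hCcancel' hhk hcthk)
          exact Submodule.subset_span (Or.inl ⟨t * (h * k), hCthk, hgrading _ _ x hx _ hmhk⟩)
      -- bracket closure for homogeneous x
    have hlie1 : ∀ (t : G) (x : L), x ∈ Lg t → ∀ m ∈ Pm, ⁅x, m⁆ ∈ Pm := by
      intro t x hx m hm
      induction hm using Submodule.span_induction with
      | mem w hw => exact core t x hx w hw
      | zero => simp only [lie_zero]; exact Submodule.zero_mem _
      | add u v _ _ hu hv => rw [lie_add]; exact Submodule.add_mem _ hu hv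
      | smul c u _ hu => rw [lie_smul]; exact Submodule.smul_mem _ _ hu
    have hlie : ∀ (x m : L), m ∈ Pm → ⁅x, m⁆ ∈ Pm := by
      intro x m hm
      have hx : x ∈ ⨆ g, Lg g := by rw [htop]; trivial
      refine Submodule.iSup_induction (motive := fun x => ⁅x, m⁆ ∈ Pm) Lg hx ?_ ?_ ?_
      · intro t y hy; exact hlie1 t y hy m hm
      · simp only [zero_lie]; exact Submodule.zero_mem _
      · intro u v hu hv; rw [add_lie]; exact Submodule.add_mem _ hu hv
    set P : LieIdeal Φ L := { toSubmodule := Pm, lie_mem := fun {x m} hm => hlie x m hm } with hP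
    -- P is nonzero since it contains Lg b
    have hPb : Lg b ≤ Pm := fun v hv => Submodule.subset_span (Or.inl ⟨b, hCb, hv⟩)
    have hPne : P ≠ ⊥ := by
      intro hbot
      apply hb
      rw [eq_bot_iff]
      intro v hv
      have : v ∈ P := hPb hv
      rw [hbot] at this
      exact this
    have hPtop : P = ⊤ := (hsimple.eq_bot_or_eq_top P).resolve_left hPne
    -- but P avoids the degree-a component
    have hQ : Pm ≤ ⨆ g, ⨆ (_ : g ≠ a), Lg g := by
      rw [hPm, Submodule.span_le]
      rintro w (⟨g, hg, hwg⟩ | ⟨h, k, y, z, hh, hk, hhk, hy, hz, rfl⟩)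
      · have hga : g ≠ a := fun hga => hg (by rw [hga])
        exact Submodule.mem_iSup_of_mem g (Submodule.mem_iSup_of_mem hga hwg)
      · by_cases hhka : h * k = a
        · by_cases hcom : h * k = k * h
          · exfalso
            apply hh
            show h * a = a * h
            rw [← hhka]
            conv_lhs => rw [hcom]
            rw [mul_assoc]
          · rw [hzero h k hcom y hy z hz]
            exact Submodule.zero_mem _
        · exact Submodule.mem_iSup_of_mem (h * k)
            (Submodule.mem_iSup_of_mem hhka (hgrading _ _ y hy z hz))
    have hLa : Lg a ≤ Pm := by
      intro v hv
      have : v ∈ P := by rw [hPtop]; trivial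
      exact this
    exact ha (eq_bot_iff.mpr ((hind a) le_rfl (hLa.trans hQ)))
  -- conclude via centralizers
  intro a b
  have hsub : S ⊆ ↑(Subgroup.centralizer S) := by
    intro g hg
    simp only [SetLike.mem_coe, Subgroup.mem_centralizer_iff]
    intro h hh
    exact key h g hh hg
  have hle : Subgroup.closure S ≤ Subgroup.centralizer S := (Subgroup.closure_le _).mpr hsub
  have hamem : ∀ h ∈ S, h * a = a * h :=
    Subgroup.mem_centralizer_iff.mp (hle (by rw [hsupp]; trivial))
  have hsub2 : S ⊆ ↑(Subgroup.centralizer {a}) := by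
    intro g hg
    simp only [SetLike.mem_coe, Subgroup.mem_centralizer_iff]
    rintro h rfl
    exact (hamem g hg).symm
  have hle2 : Subgroup.closure S ≤ Subgroup.centralizer {a} := (Subgroup.closure_le _).mpr hsub2
  have hbmem : ∀ h ∈ ({a} : Set G), h * b = b * h :=
    Subgroup.mem_centralizer_iff.mp (hle2 (by rw [hsupp]; trivial))
  exact hbmem a rfl
end
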